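/- (Player swap.) Let ε > 0 and s > 0 with s ∈ (0,1) and A ⊆ 2^ω. If player I has a winning strategy in the measure game G(s, A), then player II has a winning strategy in G(1−s, A^c). If player II has a winning strategy in G(s−ε, A) (with s−ε ∈ [0,1)), then player I has a winning strategy in G(1−s, A^c). -/

import Mathlib

open MeasureTheory

namespace MeasureGame

/-- Cantor space `2^ω`. -/
abbrev Cantor : Type := ℕ → Bool

/-- The basic cylinder set `N_t` determined by a finite binary string `t`. -/
def cyl (t : List Bool) : Set Cantor := {x | ∀ i : Fin t.length, x i.1 = t.get i}

/-- A round of the measure game: player I's pair of rationals, then player II's bit. -/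
abbrev GRound : Type := (ℚ × ℚ) × Bool

/-- A strategy for player I in the measure game. -/
abbrev StratI : Type := List GRound → ℚ × ℚ

/-- A strategy for player II in the measure game. -/
abbrev StratII : Type := List GRound → ℚ × ℚ → Bool

/-- A run of the measure game. -/
abbrev Run : Type := ℕ → GRound

/-- The history (list of completed rounds) before round `n`. -/
def hist (r : Run) (n : ℕ) : List GRound := (List.range n).map r

/-- Player II's bit at round `n`. -/
def bits (r : Run) (n : ℕ) : Bool := (r n).2

/-- The finite binary string of player II's first `n` bits. -/
def path (r : Run) (n : ℕ) : List Bool := (List.range n).map (bits r)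

/-- The value player I assigned at round `n` to the one-bit extension of the current path by `b`. -/
def valI (r : Run) (n : ℕ) (b : Bool) : ℚ := if b then (r n).1.2 else (r n).1.1

/-- The value selected by player II's move at round `n`. -/
def sel (r : Run) (n : ℕ) : ℚ := valI r n (bits r n)

/-- Legality requirements on the single value player I assigned to `path r n ++ [b]`:
it is nonnegative, at most `μ(N_{t⌢b})`, and strictly below it when the latter is positive. -/
def mOK (μ : Measure Cantor) (r : Run) (n : ℕ) (b : Bool) : Prop :=
  0 ≤ valI r n b ∧ ((valI r n b : ℝ) ≤ (μ (cyl (path r n ++ [b]))).toReal) ∧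
    (0 < (μ (cyl (path r n ++ [b]))).toReal → (valI r n b : ℝ) < (μ (cyl (path r n ++ [b]))).toReal)

/-- Player I's move at round `n` of a run is legal (for the game `G(s, ·)`). -/
def IOK (μ : Measure Cantor) (s : ℝ) (r : Run) : ℕ → Prop
  | 0 => mOK μ r 0 false ∧ mOK μ r 0 true ∧ s < ((r 0).1.1 : ℝ) + ((r 0).1.2 : ℝ)
  | (n + 1) => mOK μ r (n + 1) false ∧ mOK μ r (n + 1) true ∧
      (r (n + 1)).1.1 + (r (n + 1)).1.2 = sel r n

/-- Player II's move at round `n` of a run is legal: the selected value is nonzero. -/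
def IIOK (r : Run) (n : ℕ) : Prop := sel r n ≠ 0

/-- The run `r` is consistent with player I's strategy `σ`. -/
def ConsI (σ : StratI) (r : Run) : Prop := ∀ n, (r n).1 = σ (hist r n)

/-- The run `r` is consistent with player II's strategy `τ`. -/
def ConsII (τ : StratII) (r : Run) : Prop := ∀ n, (r n).2 = τ (hist r n) (r n).1

/-- Player II wins the run `r` of `G(s, A)`: either player I is the first to break a rule,
or all rules are followed and the sequence of II's bits belongs to `A`. -/
def IIWinsRun (μ : Measure Cantor) (s : ℝ) (A : Set Cantor) (r : Run) : Prop :=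
  (∃ n, (∀ m < n, IOK μ s r m ∧ IIOK r m) ∧ ¬ IOK μ s r n) ∨
    ((∀ n, IOK μ s r n ∧ IIOK r n) ∧ bits r ∈ A)

/-- Player I has a winning strategy in the measure game `G(s, A)`. -/
def WinsI (μ : Measure Cantor) (s : ℝ) (A : Set Cantor) : Prop :=
  ∃ σ : StratI, ∀ r : Run, ConsI σ r → ¬ IIWinsRun μ s A r

/-- Player II has a winning strategy in the measure game `G(s, A)`. -/
def WinsII (μ : Measure Cantor) (s : ℝ) (A : Set Cantor) : Prop :=
  ∃ τ : StratII, ∀ r : Run, ConsII τ r → IIWinsRun μ s A r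

/-- The outer measure `μ*(A) = inf {μ(U) : U open, A ⊆ U}`. -/
noncomputable def outerM (μ : Measure Cantor) (A : Set Cantor) : ℝ :=
  sInf {v : ℝ | ∃ U : Set Cantor, IsOpen U ∧ A ⊆ U ∧ v = (μ U).toReal}

/-- The inner measure `μ_*(A) = sup {μ(F) : F closed, F ⊆ A}`. -/
noncomputable def innerM (μ : Measure Cantor) (A : Set Cantor) : ℝ :=
  sSup {v : ℝ | ∃ F : Set Cantor, IsClosed F ∧ F ⊆ A ∧ v = (μ F).toReal}


open MeasureTheory

variable (μ : Measure Cantor)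

/-- first `n` bits of `x` as a list -/
def pref (x : Cantor) (n : ℕ) : List Bool := (List.range n).map x

@[simp] lemma pref_zero (x : Cantor) : pref x 0 = [] := rfl

lemma pref_succ (x : Cantor) (n : ℕ) : pref x (n + 1) = pref x n ++ [x n] := by
  simp [pref, List.range_succ]

@[simp] lemma pref_length (x : Cantor) (n : ℕ) : (pref x n).length = n := by
  simp [pref]

lemma pref_take (x : Cantor) {m n : ℕ} (h : m ≤ n) : (pref x n).take m = pref x m := by
  simp [pref, ← List.map_take, List.take_range, Nat.min_eq_left h]

lemma pref_eq_iff {x : Cantor} {n : ℕ} {u : List Bool} :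
    pref x n = u ↔ u.length = n ∧ ∀ i : Fin n, x i.1 = u.getD i.1 false := by
  constructor
  · rintro rfl
    refine ⟨by simp, fun i => ?_⟩
    have hi : i.1 < (pref x n).length := by simp [i.2]
    simp [pref, List.getD_eq_getElem _ _ hi]
  · rintro ⟨hlen, h⟩
    apply List.ext_getElem (by simp [hlen])
    intro i h1 h2
    have hi : i < n := by simpa using h1
    have := h ⟨i, hi⟩
    simp only [pref, List.getElem_map, List.getElem_range]
    rw [this, List.getD_eq_getElem _ _ h2]

/-- cylinder in terms of `pref` -/
def cylp (u : List Bool) : Set Cantor := {x | pref x u.length = u}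

lemma mem_cylp {u : List Bool} {x : Cantor} : x ∈ cylp u ↔ pref x u.length = u := Iff.rfl

lemma cyl_eq_cylp (u : List Bool) : cyl u = cylp u := by
  ext x
  simp only [cyl, Set.mem_setOf_eq, mem_cylp, pref_eq_iff]
  constructor
  · intro hx
    refine ⟨by simp, fun i => ?_⟩
    rw [hx i, List.getD_eq_getElem _ _ i.2]
    simp [List.get_eq_getElem]
  · rintro ⟨-, h⟩ i
    rw [h i, List.getD_eq_getElem _ _ i.2]
    simp [List.get_eq_getElem]

@[simp] lemma cylp_nil : cylp [] = Set.univ := by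
  ext x; simp [cylp]

lemma measurableSet_prefEq (u : List Bool) (n : ℕ) :
    MeasurableSet {x : Cantor | pref x n = u} := by
  by_cases hlen : u.length = n
  · have : {x : Cantor | pref x n = u} =
        ⋂ i : Fin n, (fun x : Cantor => x i.1) ⁻¹' {u.getD i.1 false} := by
      ext x; simp [pref_eq_iff, hlen]
    rw [this]
    exact MeasurableSet.iInter fun i => (measurable_pi_apply _) (measurableSet_singleton _)
  · have : {x : Cantor | pref x n = u} = ∅ := by
      ext x
      simp only [Set.mem_setOf_eq, Set.mem_empty_iff_false, iff_false]
      intro h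
      exact hlen (by rw [← h]; simp)
    simp [this]

lemma measurableSet_prefSet (P : List Bool → Prop) (n : ℕ) :
    MeasurableSet {x : Cantor | P (pref x n)} := by
  have h1 : {x : Cantor | P (pref x n)} = ⋃ (u : List Bool) (_ : P u), {x | pref x n = u} := by
    ext x; simp
  rw [h1]
  exact MeasurableSet.iUnion fun u => MeasurableSet.iUnion fun _ => measurableSet_prefEq u n

lemma measurableSet_cylp (u : List Bool) : MeasurableSet (cylp u) :=
  measurableSet_prefEq u u.length
set_option linter.unusedSectionVars false

/-- real-valued measure of `S ∩ N_v` -/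
noncomputable def creal (μ : Measure Cantor) (S : Set Cantor) (v : List Bool) : ℝ :=
  (μ (S ∩ cylp v)).toReal

noncomputable def mu' (μ : Measure Cantor) (v : List Bool) : ℝ := (μ (cylp v)).toReal

variable [IsProbabilityMeasure μ]

lemma creal_nonneg (S : Set Cantor) (v : List Bool) : 0 ≤ creal μ S v :=
  ENNReal.toReal_nonneg

lemma cylp_append (u : List Bool) (b : Bool) :
    cylp (u ++ [b]) = cylp u ∩ {x : Cantor | x u.length = b} := by
  ext x
  simp only [mem_cylp, Set.mem_inter_iff, Set.mem_setOf_eq, List.length_append,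
    List.length_singleton]
  constructor
  · intro h
    rw [pref_succ] at h
    have := List.append_inj h (by simp)
    refine ⟨this.1, by simpa using this.2⟩
  · rintro ⟨h1, h2⟩
    rw [pref_succ, h1, h2]

lemma creal_add (S : Set Cantor) (hS : MeasurableSet S) (v : List Bool) :
    creal μ S v = creal μ S (v ++ [false]) + creal μ S (v ++ [true]) := by
  have hT : MeasurableSet {x : Cantor | x v.length = true} :=
    (measurable_pi_apply _) (measurableSet_singleton _)
  have key : μ ((S ∩ cylp v) ∩ {x : Cantor | x v.length = true}) +
      μ ((S ∩ cylp v) \ {x : Cantor | x v.length = true}) = μ (S ∩ cylp v) :=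
    measure_inter_add_diff _ hT
  have hdiff : (S ∩ cylp v) \ {x : Cantor | x v.length = true} = S ∩ cylp (v ++ [false]) := by
    rw [cylp_append]
    ext x
    simp only [Set.mem_diff, Set.mem_inter_iff, Set.mem_setOf_eq]
    constructor
    · rintro ⟨⟨h1, h2⟩, h3⟩
      exact ⟨h1, h2, by simpa using h3⟩
    · rintro ⟨h1, h2, h3⟩
      exact ⟨⟨h1, h2⟩, by simp [h3]⟩
  have hintr : (S ∩ cylp v) ∩ {x : Cantor | x v.length = true} = S ∩ cylp (v ++ [true]) := by
    rw [cylp_append, Set.inter_assoc]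
  rw [hdiff, hintr] at key
  have h2 := congrArg ENNReal.toReal key
  rw [ENNReal.toReal_add (measure_ne_top _ _) (measure_ne_top _ _)] at h2
  unfold creal
  linarith [h2]

lemma mu'_eq_creal (v : List Bool) : mu' μ v = creal μ Set.univ v := by
  simp [mu', creal]

lemma mu'_add (v : List Bool) :
    mu' μ v = mu' μ (v ++ [false]) + mu' μ (v ++ [true]) := by
  rw [mu'_eq_creal, mu'_eq_creal, mu'_eq_creal]
  exact creal_add μ Set.univ MeasurableSet.univ v

lemma mu'_nonneg (v : List Bool) : 0 ≤ mu' μ v := ENNReal.toReal_nonneg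

@[simp] lemma mu'_nil : mu' μ [] = 1 := by
  simp [mu']

lemma mu'_le_one (v : List Bool) : mu' μ v ≤ 1 := by
  have : μ (cylp v) ≤ μ Set.univ := measure_mono (by simp)
  have h2 : (μ (cylp v)).toReal ≤ (μ Set.univ).toReal :=
    ENNReal.toReal_mono (measure_ne_top _ _) this
  simpa [mu'] using h2

lemma creal_le_mu' (S : Set Cantor) (v : List Bool) : creal μ S v ≤ mu' μ v :=
  ENNReal.toReal_mono (measure_ne_top _ _) (measure_mono Set.inter_subset_right)
/-! ### Grid arithmetic -/

def gstep (δ : ℚ) (k : ℕ) : ℚ := δ / 8 ^ k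

def inGrid (δ : ℚ) (k : ℕ) (a : ℚ) : Prop := ∃ m : ℕ, a = m * gstep δ k

noncomputable def gfloor (δ : ℚ) (k : ℕ) (x : ℝ) : ℚ := gstep δ k * ⌊x / (gstep δ k : ℝ)⌋

def rr (δ : ℚ) (k : ℕ) : ℚ := δ / (2 * 4 ^ k)

variable {δ : ℚ}

lemma gstep_pos (hδ : 0 < δ) (k : ℕ) : 0 < gstep δ k := by
  unfold gstep; positivity

lemma rr_pos (hδ : 0 < δ) (k : ℕ) : 0 < rr δ k := by
  unfold rr; positivity

lemma rr_step (hδ : 0 < δ) (k : ℕ) :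
    2 * rr δ (k + 1) + gstep δ (k + 1) ≤ rr δ k := by
  unfold rr gstep
  have h4 : (0:ℚ) < 4 ^ k := by positivity
  have h8 : (0:ℚ) < 8 ^ k := by positivity
  have h48 : (4:ℚ) ^ k ≤ 8 ^ k := pow_le_pow_left₀ (by norm_num) (by norm_num) k
  rw [pow_succ, pow_succ]
  have e2 : δ / (8 ^ k * 8) ≤ δ / (4 ^ k * 4) := by
    apply div_le_div_of_nonneg_left hδ.le (by positivity)
    nlinarith
  have e3 : δ / (4 ^ k * 4) + δ / (4 ^ k * 4) = δ / (2 * 4 ^ k) := by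
    field_simp
    ring
  have e1 : 2 * (δ / (2 * (4 ^ k * 4))) = δ / (4 ^ k * 4) := by
    rw [eq_div_iff (by positivity)]
    field_simp
  linarith

lemma gfloor_le (hδ : 0 < δ) (k : ℕ) (x : ℝ) : (gfloor δ k x : ℝ) ≤ x := by
  have hs : (0:ℝ) < (gstep δ k : ℝ) := by exact_mod_cast gstep_pos hδ k
  have := Int.floor_le (x / (gstep δ k : ℝ))
  unfold gfloor
  push_cast
  calc ((gstep δ k : ℝ)) * (⌊x / (gstep δ k : ℝ)⌋ : ℝ) ≤ (gstep δ k : ℝ) * (x / (gstep δ k : ℝ)) :=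
        by exact mul_le_mul_of_nonneg_left this hs.le
    _ = x := by field_simp

lemma lt_gfloor_add (hδ : 0 < δ) (k : ℕ) (x : ℝ) : x < (gfloor δ k x : ℝ) + (gstep δ k : ℝ) := by
  have hs : (0:ℝ) < (gstep δ k : ℝ) := by exact_mod_cast gstep_pos hδ k
  have := Int.lt_floor_add_one (x / (gstep δ k : ℝ))
  unfold gfloor
  push_cast
  have h2 : x / (gstep δ k : ℝ) * (gstep δ k : ℝ) < ((⌊x / (gstep δ k : ℝ)⌋ : ℝ) + 1) * (gstep δ k : ℝ) :=
    mul_lt_mul_of_pos_right this hs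
  rw [div_mul_cancel₀ _ hs.ne'] at h2
  nlinarith

lemma inGrid_zero (k : ℕ) : inGrid δ k 0 := ⟨0, by simp⟩

lemma inGrid_max_gfloor (hδ : 0 < δ) (k : ℕ) (x : ℝ) : inGrid δ k (max 0 (gfloor δ k x)) := by
  rcases le_or_gt (gfloor δ k x) 0 with h | h
  · rw [max_eq_left h]; exact inGrid_zero k
  · rw [max_eq_right h.le]
    have hs : (0:ℚ) < gstep δ k := gstep_pos hδ k
    have hfl : 0 < ⌊x / (gstep δ k : ℝ)⌋ := by
      by_contra hc
      push_neg at hc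
      have : gfloor δ k x ≤ 0 := by
        unfold gfloor
        have : (⌊x / (gstep δ k : ℝ)⌋ : ℚ) ≤ 0 := by exact_mod_cast hc
        nlinarith
      linarith
    exact ⟨⌊x / (gstep δ k : ℝ)⌋.toNat, by
      unfold gfloor
      rw [mul_comm]
      congr 1
      exact_mod_cast (Int.toNat_of_nonneg hfl.le).symm⟩

lemma inGrid_mono (hδ : 0 < δ) {k : ℕ} {a : ℚ} (h : inGrid δ k a) : inGrid δ (k + 1) a := by
  obtain ⟨m, rfl⟩ := h
  exact ⟨8 * m, by unfold gstep; push_cast; field_simp; ring⟩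

lemma inGrid_min {k : ℕ} {a b : ℚ} (ha : inGrid δ k a) (hb : inGrid δ k b) :
    inGrid δ k (min a b) := by
  rcases le_total a b with h | h
  · rwa [min_eq_left h]
  · rwa [min_eq_right h]

lemma inGrid_sub (hδ : 0 < δ) {k : ℕ} {a b : ℚ} (ha : inGrid δ k a) (hb : inGrid δ k b)
    (hle : b ≤ a) : inGrid δ k (a - b) := by
  obtain ⟨m, rfl⟩ := ha
  obtain ⟨n, rfl⟩ := hb
  have hs : 0 < gstep δ k := gstep_pos hδ k
  have hnm : n ≤ m := by
    by_contra hc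
    push_neg at hc
    have : (m : ℚ) < n := by exact_mod_cast hc
    nlinarith
  exact ⟨m - n, by
    push_cast [Nat.cast_sub hnm]
    ring⟩

lemma inGrid_nonneg (hδ : 0 < δ) {k : ℕ} {a : ℚ} (h : inGrid δ k a) : 0 ≤ a := by
  obtain ⟨m, rfl⟩ := h
  have := gstep_pos hδ k
  positivity
/-! ### Run infrastructure -/

def bitsOf (h : List GRound) : List Bool := h.map (fun q => q.2)

@[simp] lemma hist_zero (r : Run) : hist r 0 = [] := rfl

lemma hist_succ (r : Run) (n : ℕ) : hist r (n + 1) = hist r n ++ [r n] := by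
  simp [hist, List.range_succ]

@[simp] lemma hist_length (r : Run) (n : ℕ) : (hist r n).length = n := by simp [hist]

@[simp] lemma path_zero (r : Run) : path r 0 = [] := rfl

lemma path_succ (r : Run) (n : ℕ) : path r (n + 1) = path r n ++ [bits r n] := by
  simp [path, List.range_succ]

@[simp] lemma path_length (r : Run) (n : ℕ) : (path r n).length = n := by simp [path]

lemma path_eq_pref (r : Run) (n : ℕ) : path r n = pref (bits r) n := rfl

lemma bitsOf_hist (r : Run) (n : ℕ) : bitsOf (hist r n) = path r n := by
  simp only [bitsOf, hist, path, List.map_map]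
  apply List.map_congr_left
  intro a _
  rfl

/-- the run in which player I follows `σ` and player II's bit is computed by `f` -/
def histSeq (σ : StratI) (f : List GRound → ℚ × ℚ → Bool) : ℕ → List GRound
  | 0 => []
  | n + 1 => histSeq σ f n ++ [(σ (histSeq σ f n), f (histSeq σ f n) (σ (histSeq σ f n)))]

def runOf (σ : StratI) (f : List GRound → ℚ × ℚ → Bool) : Run :=
  fun n => (σ (histSeq σ f n), f (histSeq σ f n) (σ (histSeq σ f n)))

lemma hist_runOf (σ : StratI) (f : List GRound → ℚ × ℚ → Bool) (n : ℕ) :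
    hist (runOf σ f) n = histSeq σ f n := by
  induction n with
  | zero => rfl
  | succ n ih => rw [hist_succ, ih]; rfl

lemma consI_runOf (σ : StratI) (f : List GRound → ℚ × ℚ → Bool) : ConsI σ (runOf σ f) :=
  fun n => by rw [hist_runOf]; rfl

lemma consII_runOf (σ : StratI) (τ : StratII) : ConsII τ (runOf σ (fun h q => τ h q)) :=
  fun n => by rw [hist_runOf]; rfl

lemma bits_runOf (σ : StratI) (f : List GRound → ℚ × ℚ → Bool) (n : ℕ) :
    bits (runOf σ f) n = f (histSeq σ f n) (σ (histSeq σ f n)) := rfl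

/-! ### congruence lemmas : round `n` data depends only on `hist (n+1)` -/

lemma hist_congr {r1 r2 : Run} {n : ℕ} (h : ∀ i < n, r1 i = r2 i) : hist r1 n = hist r2 n := by
  unfold hist
  apply List.map_congr_left
  intro i hi
  exact h i (by simpa using hi)

lemma path_congr {r1 r2 : Run} {n : ℕ} (h : ∀ i < n, r1 i = r2 i) : path r1 n = path r2 n := by
  unfold path
  apply List.map_congr_left
  intro i hi
  unfold bits
  rw [h i (by simpa using hi)]

lemma IOK_congr (μ : Measure Cantor) (t : ℝ) {r1 r2 : Run} {n : ℕ}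
    (h : ∀ i ≤ n, r1 i = r2 i) (hok : IOK μ t r1 n) : IOK μ t r2 n := by
  have hpath : path r1 n = path r2 n := path_congr (fun i hi => h i hi.le)
  have hrn : r1 n = r2 n := h n le_rfl
  have hmok : ∀ b, mOK μ r1 n b → mOK μ r2 n b := by
    intro b hb
    unfold mOK valI at hb ⊢
    rwa [← hpath, ← hrn]
  cases n with
  | zero =>
    obtain ⟨h1, h2, h3⟩ := hok
    exact ⟨hmok _ h1, hmok _ h2, by rwa [← hrn]⟩
  | succ m =>
    obtain ⟨h1, h2, h3⟩ := hok
    have hsel : sel r1 m = sel r2 m := by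
      unfold sel valI bits
      rw [h m (by omega)]
    exact ⟨hmok _ h1, hmok _ h2, by rwa [← hrn, ← hsel]⟩

lemma IIOK_congr {r1 r2 : Run} {n : ℕ} (h : ∀ i ≤ n, r1 i = r2 i)
    (hok : IIOK r1 n) : IIOK r2 n := by
  unfold IIOK sel valI bits at hok ⊢
  rwa [← h n le_rfl]

/-! ### Mass trees -/

structure MassTree (μ : Measure Cantor) (θ : ℝ) (w : List Bool → ℚ) : Prop where
  nonneg : ∀ v, 0 ≤ w v
  addv : ∀ v, w (v ++ [false]) + w (v ++ [true]) = w v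
  root : θ < (w [] : ℝ)
  cap : ∀ v, (w v : ℝ) ≤ mu' μ v
  capstrict : ∀ v, 0 < mu' μ v → (w v : ℝ) < mu' μ v

/-- player I strategy playing the masses of `w` -/
def stratOf (w : List Bool → ℚ) : StratI :=
  fun h => (w (bitsOf h ++ [false]), w (bitsOf h ++ [true]))

lemma fst_stratOf {w : List Bool → ℚ} {r : Run} (hr : ConsI (stratOf w) r) (n : ℕ) (b : Bool) :
    valI r n b = w (path r n ++ [b]) := by
  unfold valI
  rw [hr n]
  unfold stratOf
  rw [bitsOf_hist]
  cases b <;> simp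

lemma sel_stratOf {w : List Bool → ℚ} {r : Run} (hr : ConsI (stratOf w) r) (n : ℕ) :
    sel r n = w (path r (n + 1)) := by
  unfold sel
  rw [fst_stratOf hr, ← path_succ]

lemma toReal_cyl (μ : Measure Cantor) (u : List Bool) : (μ (cyl u)).toReal = mu' μ u := by
  rw [cyl_eq_cylp]; rfl

lemma IOK_of_massTree {θ : ℝ} {w : List Bool → ℚ}
    (mt : MassTree μ θ w) {r : Run} (hr : ConsI (stratOf w) r) (n : ℕ) : IOK μ θ r n := by
  have hmok : ∀ b, mOK μ r n b := by
    intro b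
    refine ⟨?_, ?_, ?_⟩
    · rw [fst_stratOf hr]; exact mt.nonneg _
    · rw [fst_stratOf hr, toReal_cyl]; exact mt.cap _
    · simp only [fst_stratOf hr, toReal_cyl]; exact mt.capstrict _
  cases n with
  | zero =>
    refine ⟨hmok false, hmok true, ?_⟩
    have h1 : (r 0).1.1 = valI r 0 false := rfl
    have h2 : (r 0).1.2 = valI r 0 true := rfl
    rw [h1, h2, fst_stratOf hr, fst_stratOf hr]
    have := mt.addv []
    have hcast : ((w ([] ++ [false]) : ℚ) : ℝ) + ((w ([] ++ [true]) : ℚ) : ℝ) = ((w [] : ℚ) : ℝ) := by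
      exact_mod_cast congrArg (fun q : ℚ => (q : ℝ)) this
    simp only [path_zero, List.nil_append] at *
    rw [hcast]
    exact mt.root
  | succ m =>
    refine ⟨hmok false, hmok true, ?_⟩
    have h1 : (r (m+1)).1.1 = valI r (m+1) false := rfl
    have h2 : (r (m+1)).1.2 = valI r (m+1) true := rfl
    rw [h1, h2, fst_stratOf hr, fst_stratOf hr, sel_stratOf hr, ← mt.addv (path r (m+1))]

lemma winsI_of_massTree {θ : ℝ} {w : List Bool → ℚ} (hθ : 0 ≤ θ)
    (mt : MassTree μ θ w) (S : Set Cantor)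
    (hbody : ∀ x : Cantor, (∀ n, w (pref x n) ≠ 0) → x ∉ S) : WinsI μ θ S := by
  refine ⟨stratOf w, fun r hr hwin => ?_⟩
  rcases hwin with ⟨n, -, hn⟩ | ⟨hall, hA⟩
  · exact hn (IOK_of_massTree μ mt hr n)
  · refine hbody (bits r) (fun n => ?_) hA
    cases n with
    | zero =>
      intro h0
      simp only [pref_zero] at h0
      have hroot := mt.root
      rw [h0] at hroot
      push_cast at hroot
      linarith
    | succ m =>
      rw [← path_eq_pref, ← sel_stratOf hr]
      exact (hall m).2

/-- player II strategy following `w` -/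
noncomputable def stratIIOf (μ : Measure Cantor) (w : List Bool → ℚ) : StratII :=
  fun h q =>
    if hb : ∃ b : Bool, mu' μ (bitsOf h ++ [b]) <
        ((if b then q.2 else q.1 : ℚ) : ℝ) + (w (bitsOf h ++ [b]) : ℝ) then hb.choose else false

lemma winsII_of_massTree {θ' θ : ℝ} {w : List Bool → ℚ}
    (hsum : 1 ≤ θ' + θ) (hθ : 0 ≤ θ) (mt : MassTree μ θ w) (S : Set Cantor)
    (hbody : ∀ x : Cantor, (∀ n, w (pref x n) ≠ 0) → x ∈ S) : WinsII μ θ' S := by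
  classical
  refine ⟨stratIIOf μ w, fun r hr => ?_⟩
  -- the key invariant
  have step : ∀ m, (∃ b : Bool, mu' μ (path r m ++ [b]) <
      (valI r m b : ℝ) + (w (path r m ++ [b]) : ℝ)) →
      mu' μ (path r (m+1)) < (sel r m : ℝ) + (w (path r (m+1)) : ℝ) := by
    intro m hex
    have hbit : bits r m = stratIIOf μ w (hist r m) (r m).1 := hr m
    have hex' : ∃ b : Bool, mu' μ (bitsOf (hist r m) ++ [b]) <
        ((if b then (r m).1.2 else (r m).1.1 : ℚ) : ℝ) + (w (bitsOf (hist r m) ++ [b]) : ℝ) := by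
      rw [bitsOf_hist]
      exact hex
    have hspec := hex'.choose_spec
    have hbit2 : bits r m = hex'.choose := by
      rw [hbit]
      unfold stratIIOf
      rw [dif_pos hex']
    rw [← hbit2, bitsOf_hist] at hspec
    rw [path_succ]
    unfold sel valI
    exact hspec
  have key : ∀ m, (∀ j, j ≤ m → IOK μ θ' r j) →
      mu' μ (path r (m+1)) < (sel r m : ℝ) + (w (path r (m+1)) : ℝ) := by
    intro m
    induction m with
    | zero =>
      intro hok
      apply step
      obtain ⟨-, -, h3⟩ := hok 0 le_rfl
      by_contra hc
      push_neg at hc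
      have hf := hc false
      have ht := hc true
      have haddw : (w ([false]) : ℝ) + (w ([true]) : ℝ) = (w [] : ℝ) := by
        exact_mod_cast congrArg (fun q : ℚ => (q : ℝ)) (mt.addv [])
      have haddm : mu' μ [] = mu' μ [false] + mu' μ [true] := by
        simpa using mu'_add μ []
      have hroot := mt.root
      have h1 : mu' μ [] = 1 := by simp
      unfold valI at hf ht
      simp at hf ht
      linarith [hf, ht]
    | succ m ih =>
      intro hok
      apply step
      have hIm := ih (fun j hj => hok j (by omega))
      obtain ⟨-, -, h3⟩ := hok (m+1) le_rfl
      by_contra hc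
      push_neg at hc
      have hf := hc false
      have ht := hc true
      set u := path r (m+1) with hu
      have haddw : (w (u ++ [false]) : ℝ) + (w (u ++ [true]) : ℝ) = (w u : ℝ) := by
        exact_mod_cast congrArg (fun q : ℚ => (q : ℝ)) (mt.addv u)
      have haddm : mu' μ u = mu' μ (u ++ [false]) + mu' μ (u ++ [true]) := mu'_add μ u
      have hsel : ((r (m+1)).1.1 : ℝ) + ((r (m+1)).1.2 : ℝ) = (sel r m : ℝ) := by
        exact_mod_cast congrArg (fun q : ℚ => (q : ℝ)) h3
      unfold valI at hf ht
      simp at hf ht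
      linarith [hf, ht]
  -- selected value positive, and chain positive
  have hIIOK : ∀ m, (∀ j, j ≤ m → IOK μ θ' r j) → IIOK r m ∧ w (path r (m+1)) ≠ 0 := by
    intro m hok
    have hk := key m hok
    have hcap := mt.cap (path r (m+1))
    -- sel ≤ mu' from mOK
    have hmok : mOK μ r m (bits r m) := by
      have h := hok m le_rfl
      cases m with
      | zero =>
        obtain ⟨h1, h2, -⟩ := h
        cases hb : bits r 0
        · exact h1
        · exact h2
      | succ k =>
        obtain ⟨h1, h2, -⟩ := h
        cases hb : bits r (k+1)
        · exact h1
        · exact h2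
    have hselcap : (sel r m : ℝ) ≤ mu' μ (path r (m+1)) := by
      have := hmok.2.1
      rw [toReal_cyl] at this
      unfold sel
      rw [path_succ]
      exact this
    constructor
    · unfold IIOK
      intro h0
      rw [h0] at hk
      push_cast at hk
      linarith
    · intro h0
      rw [h0] at hk
      push_cast at hk
      linarith
  by_cases hall : ∀ n, IOK μ θ' r n
  · refine Or.inr ⟨fun n => ⟨hall n, (hIIOK n (fun j _ => hall j)).1⟩, ?_⟩
    apply hbody
    intro n
    cases n with
    | zero =>
      intro h0
      simp only [pref_zero] at h0
      have hroot := mt.root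
      rw [h0] at hroot
      push_cast at hroot
      linarith
    | succ m =>
      rw [← path_eq_pref]
      exact (hIIOK m (fun j _ => hall j)).2
  · push_neg at hall
    have hex : ∃ n, ¬ IOK μ θ' r n := hall
    refine Or.inl ⟨Nat.find hex, fun m hm => ?_, Nat.find_spec hex⟩
    have hokm : ∀ j, j ≤ m → IOK μ θ' r j := by
      intro j hj
      by_contra hc
      have h1 : Nat.find hex ≤ j := Nat.find_le hc
      omega
    exact ⟨hokm m le_rfl, (hIIOK m hokm).1⟩
/-! ### From a winning strategy of player I to a mass tree -/

def extC (v : List Bool) : Cantor := fun i => v.getD i false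

lemma pref_extC (v : List Bool) : pref (extC v) v.length = v := by
  rw [pref_eq_iff]
  exact ⟨rfl, fun i => rfl⟩

lemma pref_getD {x : Cantor} {i n : ℕ} (h : i < n) : (pref x n).getD i false = x i := by
  rw [List.getD_eq_getElem _ _ (by simpa using h)]
  simp [pref]

@[simp] lemma length_histSeq (σ : StratI) (f : List GRound → ℚ × ℚ → Bool) (n : ℕ) :
    (histSeq σ f n).length = n := by
  rw [← hist_runOf]; simp

lemma histSeq_congr (σ : StratI) {x y : Cantor} {n : ℕ} (h : ∀ i < n, x i = y i) :
    ∀ k, k ≤ n → histSeq σ (fun h _ => x h.length) k = histSeq σ (fun h _ => y h.length) k := by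
  intro k
  induction k with
  | zero => intro _; rfl
  | succ k ih =>
    intro hk
    have ihk := ih (by omega)
    show histSeq σ _ k ++ _ = histSeq σ _ k ++ _
    rw [ihk]
    simp only [length_histSeq]
    rw [h k (by omega)]

def runA (σ : StratI) (x : Cantor) : Run := runOf σ (fun h _ => x h.length)

lemma consI_runA (σ : StratI) (x : Cantor) : ConsI σ (runA σ x) := consI_runOf _ _

lemma bits_runA (σ : StratI) (x : Cantor) (n : ℕ) : bits (runA σ x) n = x n := by
  show (runOf _ _ n).2 = x n
  unfold runOf
  simp

lemma path_runA (σ : StratI) (x : Cantor) (n : ℕ) : path (runA σ x) n = pref x n := by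
  rw [path_eq_pref]
  unfold pref
  apply List.map_congr_left
  intro i _
  exact bits_runA σ x i

lemma fst_runA (σ : StratI) (x : Cantor) (n : ℕ) :
    (runA σ x n).1 = σ (histSeq σ (fun h _ => x h.length) n) := rfl

/-- value tree read off from strategy `σ` -/
noncomputable def wOf (σ : StratI) (v : List Bool) : ℚ :=
  if h : v = [] then (σ []).1 + (σ []).2
  else
    (if v.getLast h then (σ (histSeq σ (fun h _ => v.dropLast.getD h.length false) v.dropLast.length)).2
     else (σ (histSeq σ (fun h _ => v.dropLast.getD h.length false) v.dropLast.length)).1)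

lemma wOf_append (σ : StratI) (u : List Bool) (b : Bool) :
    wOf σ (u ++ [b]) =
      (if b then (σ (histSeq σ (fun h _ => u.getD h.length false) u.length)).2
       else (σ (histSeq σ (fun h _ => u.getD h.length false) u.length)).1) := by
  have hne : u ++ [b] ≠ [] := by simp
  rw [wOf, dif_neg hne]
  congr 1 <;> simp [List.getLast_append]

lemma valI_runA (σ : StratI) (x : Cantor) (n : ℕ) (b : Bool) :
    valI (runA σ x) n b = wOf σ (pref x n ++ [b]) := by
  rw [wOf_append]
  have hcongr : histSeq σ (fun h _ => (pref x n).getD h.length false) (pref x n).length =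
      histSeq σ (fun h _ => x h.length) n := by
    rw [pref_length]
    exact histSeq_congr σ (fun i hi => pref_getD hi) n le_rfl
  rw [hcongr]
  unfold valI
  rw [fst_runA]

lemma sel_runA (σ : StratI) (x : Cantor) (n : ℕ) :
    sel (runA σ x) n = wOf σ (pref x (n + 1)) := by
  unfold sel
  rw [bits_runA, valI_runA, pref_succ]

/-- if player I's strategy is winning then it never breaks a rule first -/
lemma IOK_of_winning {σ : StratI} {s : ℝ} {A : Set Cantor}
    (hwin : ∀ r : Run, ConsI σ r → ¬ IIWinsRun μ s A r) {r : Run} (hr : ConsI σ r)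
    (n : ℕ) (hbelow : ∀ m < n, IIOK r m) : IOK μ s r n := by
  classical
  by_contra hc
  have hex : ∃ j, j ≤ n ∧ ¬ IOK μ s r j := ⟨n, le_rfl, hc⟩
  set j0 := Nat.find hex with hj0
  have hspec := Nat.find_spec hex
  apply hwin r hr
  refine Or.inl ⟨j0, fun m hm => ⟨?_, hbelow m (by omega)⟩, hspec.2⟩
  by_contra hcc
  have : j0 ≤ m := Nat.find_le ⟨by omega, hcc⟩
  omega

/-- chain condition: all the values along `v` are nonzero -/
def chainW (σ : StratI) (v : List Bool) : Prop :=
  ∀ k, k < v.length → wOf σ (v.take (k + 1)) ≠ 0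

lemma chainW_nil (σ : StratI) : chainW σ [] := fun k hk => by simp at hk

lemma chainW_of_append {σ : StratI} {v : List Bool} {b : Bool} (h : chainW σ (v ++ [b])) :
    chainW σ v := by
  intro k hk
  have := h k (by simp only [List.length_append, List.length_singleton]; omega)
  rwa [List.take_append_of_le_length (by omega)] at this

lemma chainW_append_iff {σ : StratI} {v : List Bool} {b : Bool} :
    chainW σ (v ++ [b]) ↔ chainW σ v ∧ wOf σ (v ++ [b]) ≠ 0 := by
  constructor
  · intro h
    refine ⟨chainW_of_append h, ?_⟩
    have := h v.length (by simp)
    rwa [List.take_of_length_le (by simp)] at this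
  · rintro ⟨h1, h2⟩ k hk
    simp only [List.length_append, List.length_singleton] at hk
    rcases Nat.lt_or_ge k v.length with h | h
    · rw [List.take_append_of_le_length (by omega)]
      exact h1 k h
    · have hkv : k = v.length := by omega
      subst hkv
      rwa [List.take_of_length_le (by simp)]

/-- for a chain `v`, the run `runA σ (extC v)` is II-legal below `v.length` -/
lemma IIOK_chain {σ : StratI} {v : List Bool} (h : chainW σ v) :
    ∀ m < v.length, IIOK (runA σ (extC v)) m := by
  intro m hm
  unfold IIOK
  rw [sel_runA]
  have : pref (extC v) (m + 1) = v.take (m + 1) := by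
    rw [← pref_take (extC v) (show m + 1 ≤ v.length by omega), pref_extC]
  rw [this]
  exact h m hm
lemma massTree_of_winsI {s : ℝ} {A : Set Cantor} (h : WinsI μ s A) :
    ∃ w : List Bool → ℚ, MassTree μ s w ∧ ∀ x : Cantor, (∀ n, w (pref x n) ≠ 0) → x ∉ A := by
  classical
  obtain ⟨σ, hwin⟩ := h
  set w : List Bool → ℚ := fun v => if chainW σ v then wOf σ v else 0 with hw
  have hIOKv : ∀ v : List Bool, chainW σ v → IOK μ s (runA σ (extC v)) v.length := fun v hch =>
    IOK_of_winning μ hwin (consI_runA σ _) _ (IIOK_chain hch)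
  have hpath : ∀ v : List Bool, path (runA σ (extC v)) v.length = v := fun v => by
    rw [path_runA, pref_extC]
  have hval : ∀ (v : List Bool) (b : Bool),
      valI (runA σ (extC v)) v.length b = wOf σ (v ++ [b]) := fun v b => by
    rw [valI_runA, pref_extC]
  -- mOK facts at chain nodes
  have hmok : ∀ v : List Bool, chainW σ v → ∀ b, 0 ≤ wOf σ (v ++ [b]) ∧
      (wOf σ (v ++ [b]) : ℝ) ≤ mu' μ (v ++ [b]) ∧
      (0 < mu' μ (v ++ [b]) → (wOf σ (v ++ [b]) : ℝ) < mu' μ (v ++ [b])) := by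
    intro v hch b
    have hok := hIOKv v hch
    have hm : mOK μ (runA σ (extC v)) v.length b := by
      cases hv : v.length with
      | zero =>
        rw [hv] at hok
        cases b
        · exact hok.1
        · exact hok.2.1
      | succ k =>
        rw [hv] at hok
        cases b
        · exact hok.1
        · exact hok.2.1
    unfold mOK at hm
    rw [hval, hpath, toReal_cyl] at hm
    exact hm
  -- wOf at [] equals the sum of its two children
  have hnil : wOf σ [] = wOf σ [false] + wOf σ [true] := by
    have h1 := hval [] false
    have h2 := hval [] true
    simp only [List.nil_append] at h1 h2
    rw [← h1, ← h2]
    rfl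
  -- additivity of wOf at nonempty chain nodes
  have haddv : ∀ v : List Bool, chainW σ v →
      wOf σ (v ++ [false]) + wOf σ (v ++ [true]) = wOf σ v := by
    intro v hch
    have hok := hIOKv v hch
    rw [← hval v false, ← hval v true]
    cases hv : v.length with
    | zero =>
      have hv' : v = [] := List.length_eq_zero_iff.1 hv
      subst hv'
      have h1 := hval [] false
      have h2 := hval [] true
      simp only [List.nil_append] at h1 h2
      rw [hnil, ← h1, ← h2]
      rfl
    | succ k =>
      rw [hv] at hok
      obtain ⟨-, -, h3⟩ := hok
      unfold valI
      simp only [if_true, if_false]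
      have hsel : sel (runA σ (extC v)) k = wOf σ v := by
        rw [sel_runA, show k + 1 = v.length by omega, pref_extC]
      rw [← hsel, ← h3]
      simp
  -- children of a chain node have w = wOf
  have hwchild : ∀ (v : List Bool) (b : Bool), chainW σ v → w (v ++ [b]) = wOf σ (v ++ [b]) := by
    intro v b hch
    by_cases hc : chainW σ (v ++ [b])
    · simp [hw, hc]
    · have : wOf σ (v ++ [b]) = 0 := by
        by_contra hne
        exact hc (chainW_append_iff.2 ⟨hch, hne⟩)
      simp [hw, hc, this]
  have hchainnil : chainW σ [] := chainW_nil σ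
  have hwnil : w [] = wOf σ [] := by simp [hw, hchainnil]
  refine ⟨w, ⟨?_, ?_, ?_, ?_, ?_⟩, ?_⟩
  · -- nonneg
    intro v
    induction v using List.reverseRecOn with
    | nil =>
      rw [hwnil, hnil]
      have h1 := (hmok [] hchainnil false).1
      have h2 := (hmok [] hchainnil true).1
      simp only [List.nil_append] at h1 h2
      linarith
    | append_singleton u b _ =>
      by_cases hc : chainW σ (u ++ [b])
      · have hcu := chainW_of_append hc
        rw [hwchild u b hcu]
        exact (hmok u hcu b).1
      · simp [hw, hc]
  · -- additivity
    intro v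
    by_cases hc : chainW σ v
    · rw [hwchild v false hc, hwchild v true hc, haddv v hc]
      simp [hw, hc]
    · have hc0 : ∀ b, ¬ chainW σ (v ++ [b]) := fun b hcb => hc (chainW_append_iff.1 hcb).1
      simp [hw, hc, hc0 false, hc0 true]
  · -- root
    rw [hwnil]
    have hok := hIOKv [] hchainnil
    obtain ⟨-, -, h3⟩ := hok
    have : ((σ []).1 : ℝ) + ((σ []).2 : ℝ) = ((wOf σ [] : ℚ) : ℝ) := by
      have : wOf σ [] = (σ []).1 + (σ []).2 := by rfl
      rw [this]; push_cast; ring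
    rw [← this]
    exact h3
  · -- cap
    intro v
    induction v using List.reverseRecOn with
    | nil =>
      rw [hwnil, hnil]
      have h1 := (hmok [] hchainnil false).2.1
      have h2 := (hmok [] hchainnil true).2.1
      simp only [List.nil_append] at h1 h2
      have hm : mu' μ [] = mu' μ [false] + mu' μ [true] := by
        have := mu'_add μ []
        simpa using this
      rw [hm]
      push_cast
      linarith
    | append_singleton u b _ =>
      by_cases hc : chainW σ (u ++ [b])
      · have hcu := chainW_of_append hc
        rw [hwchild u b hcu]
        exact (hmok u hcu b).2.1
      · simp only [hw]
        rw [if_neg hc]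
        push_cast
        exact mu'_nonneg μ _
  · -- capstrict
    intro v
    induction v using List.reverseRecOn with
    | nil =>
      intro _hpos
      rw [hwnil, hnil]
      have h1 := (hmok [] hchainnil false)
      have h2 := (hmok [] hchainnil true)
      simp only [List.nil_append] at h1 h2
      have hm : mu' μ [] = mu' μ [false] + mu' μ [true] := by
        have := mu'_add μ []
        simpa using this
      have hone : mu' μ [] = 1 := by simp
      rw [hm]
      push_cast
      rcases lt_or_ge 0 (mu' μ [false]) with hp | hp
      · have := h1.2.2 hp
        linarith [h2.2.1]
      · have hz : mu' μ [false] = 0 := le_antisymm hp (mu'_nonneg μ _)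
        have hpt : 0 < mu' μ [true] := by
          rw [hm, hz] at hone
          simp at hone
          linarith
        have := h2.2.2 hpt
        linarith [h1.2.1]
    | append_singleton u b _ =>
      intro hpos
      by_cases hc : chainW σ (u ++ [b])
      · have hcu := chainW_of_append hc
        rw [hwchild u b hcu]
        exact (hmok u hcu b).2.2 hpos
      · simp only [hw]
        rw [if_neg hc]
        push_cast
        exact hpos
  · -- body
    intro x hx hA
    have hch : ∀ n, chainW σ (pref x n) := by
      intro n
      by_contra hc
      exact hx n (by simp [hw, hc])
    have hwOf : ∀ n, wOf σ (pref x n) ≠ 0 := by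
      intro n
      have := hx n
      simpa [hw, hch n] using this
    have hIIOK : ∀ m, IIOK (runA σ x) m := by
      intro m
      unfold IIOK
      rw [sel_runA]
      exact hwOf (m + 1)
    have hIOK : ∀ n, IOK μ s (runA σ x) n :=
      fun n => IOK_of_winning μ hwin (consI_runA σ x) n (fun m _ => hIIOK m)
    apply hwin (runA σ x) (consI_runA σ x)
    refine Or.inr ⟨fun n => ⟨hIOK n, hIIOK n⟩, ?_⟩
    have : bits (runA σ x) = x := funext (bits_runA σ x)
    rw [this]
    exact hA
/-! ### The split construction: a rational grid mass tree below an additive real bound -/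

noncomputable def splitW (c : List Bool → ℝ) (δ : ℚ) (v : List Bool) : ℚ :=
  if h : v = [] then max 0 (gfloor δ 0 (c [] - (rr δ 0 : ℝ)))
  else
    let u := v.dropLast
    let m := splitW c δ u
    let a := min m (max 0 (gfloor δ v.length (c (u ++ [false]) - (rr δ v.length : ℝ))))
    if v.getLast h then m - a else a
termination_by v.length
decreasing_by
  simp only [List.length_dropLast]
  have : v.length ≠ 0 := fun hh => h (List.length_eq_zero_iff.1 hh)
  omega

noncomputable def splitA (c : List Bool → ℝ) (δ : ℚ) (u : List Bool) : ℚ :=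
  min (splitW c δ u)
    (max 0 (gfloor δ (u.length + 1) (c (u ++ [false]) - (rr δ (u.length + 1) : ℝ))))

lemma splitW_nil (c : List Bool → ℝ) (δ : ℚ) :
    splitW c δ [] = max 0 (gfloor δ 0 (c [] - (rr δ 0 : ℝ))) := by
  rw [splitW]
  simp

lemma splitW_append (c : List Bool → ℝ) (δ : ℚ) (u : List Bool) (b : Bool) :
    splitW c δ (u ++ [b]) = if b then splitW c δ u - splitA c δ u else splitA c δ u := by
  rw [splitW]
  have hne : u ++ [b] ≠ [] := by simp
  rw [dif_neg hne]
  simp only [List.dropLast_concat, List.getLast_append, List.length_append,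
    List.length_singleton]
  rfl
lemma splitW_spec {c : List Bool → ℝ} {δ : ℚ} (hδ : 0 < δ)
    (hcadd : ∀ v, c v = c (v ++ [false]) + c (v ++ [true])) :
    ∀ v : List Bool, 0 ≤ splitW c δ v ∧
      (splitW c δ v ≠ 0 → (splitW c δ v : ℝ) ≤ c v - (rr δ v.length : ℝ)) ∧
      inGrid δ v.length (splitW c δ v) := by
  intro v
  induction v using List.reverseRecOn with
  | nil =>
    rw [splitW_nil]
    refine ⟨le_max_left _ _, ?_, by simpa using inGrid_max_gfloor hδ 0 _⟩
    intro hne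
    rcases le_or_gt (gfloor δ 0 (c [] - (rr δ 0 : ℝ))) 0 with hg | hg
    · exact absurd (max_eq_left hg) hne
    · rw [max_eq_right hg.le]
      simpa using gfloor_le hδ 0 (c [] - (rr δ 0 : ℝ))
  | append_singleton u b ih =>
    obtain ⟨hm0, hsupp, hgrid⟩ := ih
    set m := splitW c δ u with hmdef
    set g := gfloor δ (u.length + 1) (c (u ++ [false]) - (rr δ (u.length + 1) : ℝ)) with hgdef
    set a := splitA c δ u with hadef
    have hadef' : a = min m (max 0 g) := rfl
    have hA0 : (0:ℚ) ≤ max 0 g := le_max_left _ _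
    have ha0 : 0 ≤ a := le_min hm0 hA0
    have ham : a ≤ m := min_le_left _ _
    have hval : splitW c δ (u ++ [b]) = if b then m - a else a := splitW_append c δ u b
    have hlen : (u ++ [b]).length = u.length + 1 := by simp
    have hgrid_a : inGrid δ (u.length + 1) a := by
      rw [hadef']
      exact inGrid_min (inGrid_mono hδ hgrid) (by simpa using inGrid_max_gfloor hδ (u.length+1) _)
    have hgrid_ma : inGrid δ (u.length + 1) (m - a) :=
      inGrid_sub hδ (inGrid_mono hδ hgrid) hgrid_a ham
    have hgle : (g : ℝ) ≤ c (u ++ [false]) - (rr δ (u.length + 1) : ℝ) :=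
      gfloor_le hδ _ _
    have hglt : c (u ++ [false]) - (rr δ (u.length + 1) : ℝ) <
        (g : ℝ) + (gstep δ (u.length + 1) : ℝ) := lt_gfloor_add hδ _ _
    -- support bound for the `false` child
    have hsf : a ≠ 0 → (a : ℝ) ≤ c (u ++ [false]) - (rr δ ((u ++ [false]).length) : ℝ) := by
      intro hane
      simp only [List.length_append, List.length_singleton]
      have hAne : max 0 g ≠ 0 := by
        intro h0
        apply hane
        have h1 : a ≤ 0 := by rw [hadef', h0]; exact min_le_right _ _
        exact le_antisymm h1 ha0
      have hgpos : 0 < g := by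
        rcases le_or_gt g 0 with h | h
        · exact absurd (max_eq_left h) hAne
        · exact h
      have haA : (a : ℚ) ≤ g := le_trans (min_le_right _ _) (le_of_eq (max_eq_right hgpos.le))
      calc (a : ℝ) ≤ (g : ℝ) := by exact_mod_cast haA
        _ ≤ _ := by
            simpa using hgle
    -- support bound for the `true` child
    have hst : m - a ≠ 0 → ((m - a : ℚ) : ℝ) ≤ c (u ++ [true]) - (rr δ ((u ++ [true]).length) : ℝ) := by
      intro hmane
      have hmne : m ≠ 0 := by
        intro h0
        apply hmane
        have : a = 0 := le_antisymm (h0 ▸ ham) ha0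
        rw [h0, this]
        ring
      have hm := hsupp hmne
      have hrrsq : ((2 * rr δ (u.length + 1) + gstep δ (u.length + 1) : ℚ) : ℝ) ≤ ((rr δ u.length : ℚ) : ℝ) := by
        exact_mod_cast rr_step hδ u.length
      have hcaddu := hcadd u
      have halta : a < m := lt_of_le_of_ne ham (fun h => hmane (by rw [h]; ring))
      have haA : a = max 0 g := by
        rcases min_cases m (max 0 g) with ⟨h1, h2⟩ | ⟨h1, h2⟩
        · rw [hadef'] at halta; rw [h1] at halta; exact absurd halta (lt_irrefl m)
        · rw [hadef', h1]
      push_cast at hrrsq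
      rcases le_or_gt g 0 with hg0 | hg0
      · -- a = 0, m ≤ c u - rr k, and c(u++[false]) is small
        have ha' : a = 0 := by rw [haA, max_eq_left hg0]
        have hcf : c (u ++ [false]) < (rr δ (u.length + 1) : ℝ) + (gstep δ (u.length + 1) : ℝ) := by
          have : (g : ℝ) ≤ 0 := by exact_mod_cast hg0
          linarith
        have : ((m - a : ℚ) : ℝ) = (m : ℝ) := by rw [ha']; push_cast; ring
        rw [this]
        simp only [List.length_append, List.length_singleton]
        linarith
      · -- a = g
        have ha' : a = g := by rw [haA, max_eq_right hg0.le]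
        have hcast : ((m - a : ℚ) : ℝ) = (m : ℝ) - (g : ℝ) := by rw [ha']; push_cast; ring
        rw [hcast]
        simp only [List.length_append, List.length_singleton]
        linarith
    cases b with
    | false =>
      rw [hval, if_neg (by simp)]
      exact ⟨ha0, hsf, by simpa using hgrid_a⟩
    | true =>
      rw [hval, if_pos rfl]
      exact ⟨by linarith, hst, by simpa using hgrid_ma⟩
lemma splitW_massTree {c : List Bool → ℝ} {δ : ℚ} {θ : ℝ} (hδ : 0 < δ)
    (hcadd : ∀ v, c v = c (v ++ [false]) + c (v ++ [true]))
    (hcap : ∀ v, c v ≤ mu' μ v) (hroot : θ + 2 * (δ : ℝ) ≤ c []) :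
    MassTree μ θ (splitW c δ) ∧ (∀ v, splitW c δ v ≠ 0 → 0 < c v) ∧
      (∀ v, inGrid δ v.length (splitW c δ v)) := by
  have hspec := splitW_spec hδ hcadd
  have hsupp : ∀ v, splitW c δ v ≠ 0 → 0 < c v := by
    intro v hv
    have h1 := (hspec v).2.1 hv
    have h2 : (0:ℚ) < splitW c δ v := lt_of_le_of_ne (hspec v).1 (Ne.symm hv)
    have h3 : (0:ℝ) < (splitW c δ v : ℝ) := by exact_mod_cast h2
    have h4 : (0:ℝ) < (rr δ v.length : ℝ) := by exact_mod_cast rr_pos hδ v.length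
    linarith
  refine ⟨⟨fun v => (hspec v).1, ?_, ?_, ?_, ?_⟩, hsupp, fun v => (hspec v).2.2⟩
  · -- additivity
    intro v
    rw [splitW_append, splitW_append, if_neg (by simp), if_pos rfl]
    ring
  · -- root
    rw [splitW_nil]
    have hg := lt_gfloor_add hδ 0 (c [] - (rr δ 0 : ℝ))
    have hrr : (rr δ 0 : ℝ) = (δ : ℝ) / 2 := by
      unfold rr; push_cast; norm_num
    have hgs : (gstep δ 0 : ℝ) = (δ : ℝ) := by
      unfold gstep; push_cast; norm_num
    have hδ' : (0:ℝ) < (δ : ℝ) := by exact_mod_cast hδ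
    have h1 : θ < (gfloor δ 0 (c [] - (rr δ 0 : ℝ)) : ℝ) := by
      linarith [hg, hrr, hgs]
    have h2 : (gfloor δ 0 (c [] - (rr δ 0 : ℝ)) : ℚ) ≤ max 0 (gfloor δ 0 (c [] - (rr δ 0 : ℝ))) :=
      le_max_right _ _
    have h2' : ((gfloor δ 0 (c [] - (rr δ 0 : ℝ)) : ℚ) : ℝ) ≤
        ((max 0 (gfloor δ 0 (c [] - (rr δ 0 : ℝ))) : ℚ) : ℝ) := by exact_mod_cast h2
    linarith
  · -- cap
    intro v
    by_cases hv : splitW c δ v = 0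
    · rw [hv]
      push_cast
      exact mu'_nonneg μ v
    · have h1 := (hspec v).2.1 hv
      have h4 : (0:ℝ) < (rr δ v.length : ℝ) := by exact_mod_cast rr_pos hδ v.length
      linarith [hcap v]
  · -- capstrict
    intro v hpos
    by_cases hv : splitW c δ v = 0
    · rw [hv]; push_cast; exact hpos
    · have h1 := (hspec v).2.1 hv
      have h4 : (0:ℝ) < (rr δ v.length : ℝ) := by exact_mod_cast rr_pos hδ v.length
      linarith [hcap v]
/-! ### Grid-legal runs consistent with a strategy of player II -/

def GLegal (μ : Measure Cantor) (t : ℝ) (τ : StratII) (δ : ℚ) (r : Run) (m : ℕ) : Prop :=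
  IOK μ t r m ∧ IIOK r m ∧ inGrid δ (m + 1) (r m).1.1 ∧ inGrid δ (m + 1) (r m).1.2 ∧
    (r m).2 = τ (hist r m) (r m).1

def Bset (μ : Measure Cantor) (t : ℝ) (τ : StratII) (δ : ℚ) (u : List Bool) : Prop :=
  ∃ r : Run, (∀ m < u.length, GLegal μ t τ δ r m) ∧ path r u.length = u

lemma path_take (r : Run) {N M : ℕ} (h : N ≤ M) : (path r M).take N = path r N := by
  rw [path_eq_pref, path_eq_pref]
  exact pref_take _ h

lemma Bset_anti {t : ℝ} {τ : StratII} {δ : ℚ} {x : Cantor} {m n : ℕ} (h : m ≤ n)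
    (hB : Bset μ t τ δ (pref x n)) : Bset μ t τ δ (pref x m) := by
  obtain ⟨r, hleg, hpath⟩ := hB
  rw [pref_length] at hleg hpath
  refine ⟨r, ?_, ?_⟩
  · rw [pref_length]
    intro k hk
    exact hleg k (by omega)
  · rw [pref_length]
    rw [← path_take r h, hpath, pref_take x h]

/-- The steering argument: the strings not in the tree `Bset` cannot have measure `≥ t + 2δ`,
since player I could then force `τ` out of the tree, a contradiction. -/
lemma steering {t : ℝ} {A : Set Cantor} {τ : StratII} {δ : ℚ} (hδ : 0 < δ) (ht0 : 0 ≤ t)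
    (hτ : ∀ r : Run, ConsII τ r → IIWinsRun μ t A r) (n : ℕ)
    (hbig : t + 2 * (δ : ℝ) ≤ (μ {x : Cantor | ¬ Bset μ t τ δ (pref x n)}).toReal) : False := by
  classical
  set S := {x : Cantor | ¬ Bset μ t τ δ (pref x n)} with hSdef
  have hS : MeasurableSet S := by rw [hSdef]; exact measurableSet_prefSet (fun u => ¬ Bset μ t τ δ u) n
  have hroot : t + 2 * (δ : ℝ) ≤ creal μ S [] := by
    unfold creal
    rwa [cylp_nil, Set.inter_univ]
  obtain ⟨mt, hsup, hgridW⟩ := splitW_massTree μ (c := creal μ S) (θ := t) hδ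
    (creal_add μ S hS) (creal_le_mu' μ S) hroot
  set w := splitW (creal μ S) δ with hwdef
  set r := runOf (stratOf w) (fun h q => τ h q) with hrdef
  have hConsI : ConsI (stratOf w) r := consI_runOf _ _
  have hConsII : ConsII τ r := consII_runOf _ _
  have hIOK : ∀ m, IOK μ t r m := IOK_of_massTree μ mt hConsI
  have hIIOK : ∀ m, IIOK r m := by
    rcases hτ r hConsII with ⟨n', -, hn'⟩ | ⟨hall, -⟩
    · exact absurd (hIOK n') hn'
    · exact fun m => (hall m).2
  have hfst : ∀ m, (r m).1.1 = w (path r m ++ [false]) := by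
    intro m
    have := fst_stratOf hConsI m false
    simpa [valI] using this
  have hsnd : ∀ m, (r m).1.2 = w (path r m ++ [true]) := by
    intro m
    have := fst_stratOf hConsI m true
    simpa [valI] using this
  have hGLegal : ∀ m, GLegal μ t τ δ r m := by
    intro m
    refine ⟨hIOK m, hIIOK m, ?_, ?_, hConsII m⟩
    · rw [hfst m]
      have := hgridW (path r m ++ [false])
      simpa using this
    · rw [hsnd m]
      have := hgridW (path r m ++ [true])
      simpa using this
  set x := bits r with hxdef
  have hBx : Bset μ t τ δ (pref x n) := by
    refine ⟨r, ?_, ?_⟩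
    · intro m _
      exact hGLegal m
    · rw [pref_length, path_eq_pref]
  have hwne : w (pref x n) ≠ 0 := by
    cases n with
    | zero =>
      intro h0
      simp only [pref_zero] at h0
      have := mt.root
      rw [h0] at this
      push_cast at this
      linarith
    | succ m =>
      rw [← path_eq_pref, ← sel_stratOf hConsI]
      exact hIIOK m
  have hpos : 0 < creal μ S (pref x n) := hsup _ hwne
  have hne : (S ∩ cylp (pref x n)).Nonempty := by
    apply MeasureTheory.nonempty_of_measure_ne_zero (μ := μ)
    intro h0
    rw [creal, h0] at hpos
    simp at hpos
  obtain ⟨y, hyS, hycyl⟩ := hne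
  rw [mem_cylp, pref_length] at hycyl
  rw [hSdef] at hyS
  simp only [Set.mem_setOf_eq] at hyS
  rw [hycyl] at hyS
  exact hyS hBx

/-- the measure of level `n` of the tree `Bset` is at least `1 - t - 2δ` -/
lemma Bset_level_bound {t : ℝ} {A : Set Cantor} {τ : StratII} {δ : ℚ} (hδ : 0 < δ) (ht0 : 0 ≤ t)
    (hτ : ∀ r : Run, ConsII τ r → IIWinsRun μ t A r) (n : ℕ) :
    1 - t - 2 * (δ : ℝ) ≤ (μ {x : Cantor | Bset μ t τ δ (pref x n)}).toReal := by
  classical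
  by_contra hc
  push_neg at hc
  apply steering μ hδ ht0 hτ n
  have hL : MeasurableSet {x : Cantor | Bset μ t τ δ (pref x n)} :=
    measurableSet_prefSet (fun u => Bset μ t τ δ u) n
  have hcompl : {x : Cantor | ¬ Bset μ t τ δ (pref x n)} =
      {x : Cantor | Bset μ t τ δ (pref x n)}ᶜ := rfl
  rw [hcompl, prob_compl_eq_one_sub hL, ENNReal.toReal_sub_of_le prob_le_one ENNReal.one_ne_top]
  simp only [ENNReal.toReal_one]
  linarith
lemma run_eq_of_hist_eq {r1 r2 : Run} {n : ℕ} (h : hist r1 n = hist r2 n) :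
    ∀ i < n, r1 i = r2 i := by
  intro i hi
  have h1 : (hist r1 n).getD i (((0,0),false)) = (hist r2 n).getD i (((0,0),false)) := by rw [h]
  have h2 : ∀ r : Run, (hist r n).getD i (((0,0),false)) = r i := by
    intro r
    rw [List.getD_eq_getElem _ _ (by simpa using hi)]
    simp [hist]
  rwa [h2, h2] at h1

lemma GLegal_congr {t : ℝ} {τ : StratII} {δ : ℚ} {r1 r2 : Run} {m : ℕ}
    (h : ∀ i ≤ m, r1 i = r2 i) (hg : GLegal μ t τ δ r1 m) : GLegal μ t τ δ r2 m := by
  obtain ⟨h1, h2, h3, h4, h5⟩ := hg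
  have hm : r1 m = r2 m := h m le_rfl
  refine ⟨IOK_congr μ t h h1, IIOK_congr h h2, by rwa [← hm], by rwa [← hm], ?_⟩
  rw [← hm, ← hist_congr (fun i hi => h i hi.le)]
  exact h5

/-- König's lemma step: every branch of the finitely-branching tree of grid-legal
`τ`-consistent positions following `x` gives an infinite legal run. -/
lemma koenig {t : ℝ} {A : Set Cantor} {τ : StratII} {δ : ℚ} (hδ : 0 < δ)
    (hτ : ∀ r : Run, ConsII τ r → IIWinsRun μ t A r) (x : Cantor)
    (hx : ∀ n, Bset μ t τ δ (pref x n)) : x ∈ A := by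
  classical
  set Good : List GRound → Prop := fun p => ∀ N, ∃ r : Run,
    hist r p.length = p ∧ (∀ m < N, GLegal μ t τ δ r m) ∧ path r N = pref x N with hGood
  have hGood0 : Good [] := by
    intro N
    obtain ⟨r, hleg, hpath⟩ := hx N
    rw [pref_length] at hleg hpath
    exact ⟨r, rfl, hleg, hpath⟩
  have hstep : ∀ p, Good p → ∃ q : GRound, Good (p ++ [q]) := by
    intro p hp
    set k := p.length with hk
    -- witnesses with arbitrarily long legality
    have hwit : ∀ j : ℕ, ∃ r : Run, hist r k = p ∧ (∀ m < k + 1 + j, GLegal μ t τ δ r m) ∧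
        path r (k + 1 + j) = pref x (k + 1 + j) := fun j => hp (k + 1 + j)
    choose R hR1 hR2 hR3 using hwit
    have hRk : ∀ j, GLegal μ t τ δ (R j) k := fun j => hR2 j k (by omega)
    -- grid representation of the moves at round k
    have hgrid1 : ∀ j, ∃ m : ℕ, (R j k).1.1 = m * gstep δ (k + 1) := fun j => (hRk j).2.2.1
    have hgrid2 : ∀ j, ∃ m : ℕ, (R j k).1.2 = m * gstep δ (k + 1) := fun j => (hRk j).2.2.2.1
    choose i1 hi1 using hgrid1
    choose i2 hi2 using hgrid2
    set M : ℕ := ⌈(1 : ℚ) / gstep δ (k + 1)⌉₊ with hM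
    have hgpos : (0:ℚ) < gstep δ (k + 1) := gstep_pos hδ _
    have hbound : ∀ (j : ℕ) (i : ℕ), ((i : ℚ) * gstep δ (k+1) ≤ 1) → i < M + 1 := by
      intro j i hle
      have h1 : (i : ℚ) ≤ 1 / gstep δ (k + 1) := by
        rw [le_div_iff₀ hgpos]
        exact hle
      have h2 : (1 : ℚ) / gstep δ (k + 1) ≤ (M : ℚ) := by
        rw [hM]
        exact Nat.le_ceil _
      have : (i : ℚ) ≤ (M : ℚ) := le_trans h1 h2
      have : i ≤ M := by exact_mod_cast this
      omega
    have hle1 : ∀ j, (i1 j : ℚ) * gstep δ (k+1) ≤ 1 := by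
      intro j
      have hmok : mOK μ (R j) k false := by
        have hok := (hRk j).1
        cases hkk : k with
        | zero => rw [hkk] at hok; exact hok.1
        | succ k' => rw [hkk] at hok; exact hok.1
      have h1 : ((R j k).1.1 : ℝ) ≤ mu' μ (path (R j) k ++ [false]) := by
        have := hmok.2.1
        rwa [toReal_cyl] at this
      have h2 : ((R j k).1.1 : ℝ) ≤ 1 := le_trans h1 (mu'_le_one μ _)
      rw [hi1 j] at h2
      exact_mod_cast h2
    have hle2 : ∀ j, (i2 j : ℚ) * gstep δ (k+1) ≤ 1 := by
      intro j
      have hmok : mOK μ (R j) k true := by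
        have hok := (hRk j).1
        cases hkk : k with
        | zero => rw [hkk] at hok; exact hok.2.1
        | succ k' => rw [hkk] at hok; exact hok.2.1
      have h1 : ((R j k).1.2 : ℝ) ≤ mu' μ (path (R j) k ++ [true]) := by
        have := hmok.2.1
        rwa [toReal_cyl] at this
      have h2 : ((R j k).1.2 : ℝ) ≤ 1 := le_trans h1 (mu'_le_one μ _)
      rw [hi2 j] at h2
      exact_mod_cast h2
    -- pigeonhole
    set e : ℕ → Fin (M + 1) × Fin (M + 1) := fun j =>
      (⟨i1 j, hbound j _ (hle1 j)⟩, ⟨i2 j, hbound j _ (hle2 j)⟩) with he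
    obtain ⟨y, hy⟩ := Finite.exists_infinite_fiber e
    have hyinf : (e ⁻¹' {y}).Infinite := Set.infinite_coe_iff.1 hy
    obtain ⟨j0, hj0⟩ := hyinf.nonempty
    -- all the witnesses in the fiber make the same move at round k
    have hsame : ∀ j ∈ e ⁻¹' {y}, R j k = R j0 k := by
      intro j hj
      have hee : e j = e j0 := by
        rw [Set.mem_preimage, Set.mem_singleton_iff] at hj hj0
        rw [hj, hj0]
      have h11 : i1 j = i1 j0 := by
        have := congrArg (fun z => z.1.1) hee
        simpa [he] using this
      have h22 : i2 j = i2 j0 := by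
        have := congrArg (fun z => z.2.1) hee
        simpa [he] using this
      have hfst : (R j k).1 = (R j0 k).1 := by
        have e1 : (R j k).1.1 = (R j0 k).1.1 := by rw [hi1 j, hi1 j0, h11]
        have e2 : (R j k).1.2 = (R j0 k).1.2 := by rw [hi2 j, hi2 j0, h22]
        exact Prod.ext e1 e2
      have hsndj : (R j k).2 = τ p (R j k).1 := by
        have := (hRk j).2.2.2.2
        rwa [hR1 j] at this
      have hsndj0 : (R j0 k).2 = τ p (R j0 k).1 := by
        have := (hRk j0).2.2.2.2
        rwa [hR1 j0] at this
      apply Prod.ext hfst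
      rw [hsndj, hsndj0, hfst]
    refine ⟨R j0 k, ?_⟩
    intro N
    obtain ⟨j, hjmem, hjN⟩ := hyinf.exists_gt N
    refine ⟨R j, ?_, fun m _ => hR2 j m (by omega), ?_⟩
    · have hlen : (p ++ [R j0 k]).length = k + 1 := by simp [hk]
      rw [hlen, hist_succ, hR1 j, hsame j hjmem]
    · rw [← path_take (R j) (show N ≤ k + 1 + j by omega), hR3 j, pref_take x (by omega)]
  -- build the infinite run by recursion
  choose stepq hstepq using hstep
  let seq : ℕ → {p : List GRound // Good p} := fun n =>
    Nat.rec ⟨[], hGood0⟩ (fun _ ih => ⟨ih.1 ++ [stepq ih.1 ih.2], hstepq ih.1 ih.2⟩) n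
  have hseq_succ : ∀ n, (seq (n+1)).1 = (seq n).1 ++ [stepq (seq n).1 (seq n).2] := fun n => rfl
  have hseq_len : ∀ n, (seq n).1.length = n := by
    intro n
    induction n with
    | zero => rfl
    | succ n ih => rw [hseq_succ, List.length_append, ih]; rfl
  set rstar : Run := fun n => stepq (seq n).1 (seq n).2 with hrstar
  have hhist : ∀ n, hist rstar n = (seq n).1 := by
    intro n
    induction n with
    | zero => rfl
    | succ n ih => rw [hist_succ, ih, hseq_succ]
  -- transfer legality from finite witnesses to the infinite run
  have hwitn : ∀ n, ∃ r : Run, hist r n = hist rstar n ∧ (∀ m < n, GLegal μ t τ δ r m) ∧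
      path r n = pref x n := by
    intro n
    obtain ⟨r, h1, h2, h3⟩ := (seq n).2 n
    rw [hseq_len n] at h1
    exact ⟨r, by rw [h1, hhist n], h2, h3⟩
  have hleg : ∀ m, GLegal μ t τ δ rstar m := by
    intro m
    obtain ⟨r, h1, h2, -⟩ := hwitn (m + 1)
    exact GLegal_congr μ (fun i hi => run_eq_of_hist_eq h1 i (by omega)) (h2 m (by omega))
  have hpath : ∀ n, path rstar n = pref x n := by
    intro n
    obtain ⟨r, h1, -, h3⟩ := hwitn n
    rw [← h3]
    exact (path_congr (run_eq_of_hist_eq h1)).symm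
  have hbits : bits rstar = x := by
    funext i
    have h1 := hpath (i + 1)
    rw [path_succ, pref_succ, hpath i] at h1
    have := List.append_inj h1 rfl
    simpa using this.2
  have hcons : ConsII τ rstar := fun m => (hleg m).2.2.2.2
  rcases hτ rstar hcons with ⟨n', -, hn'⟩ | ⟨-, hmem⟩
  · exact absurd (hleg n').1 hn'
  · rwa [hbits] at hmem
lemma massTree_of_winsII {t θ : ℝ} {A : Set Cantor} (h : WinsII μ t A) (ht0 : 0 ≤ t)
    (hθ0 : 0 ≤ θ) (hθ : θ < 1 - t) :
    ∃ w : List Bool → ℚ, MassTree μ θ w ∧ ∀ x : Cantor, (∀ n, w (pref x n) ≠ 0) → x ∈ A := by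
  classical
  obtain ⟨τ, hτ⟩ := h
  obtain ⟨δ, hδ0, hδ4⟩ : ∃ δ : ℚ, 0 < δ ∧ θ + 4 * (δ : ℝ) < 1 - t := by
    obtain ⟨q, hq1, hq2⟩ := exists_rat_btwn (show (0:ℝ) < (1 - t - θ) / 8 by linarith)
    refine ⟨q, by exact_mod_cast hq1, ?_⟩
    have : (q : ℝ) < (1 - t - θ) / 8 := hq2
    linarith
  set s : ℕ → Set Cantor := fun n => {x : Cantor | Bset μ t τ δ (pref x n)} with hs
  have hsmeas : ∀ n, MeasurableSet (s n) := fun n =>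
    measurableSet_prefSet (fun u => Bset μ t τ δ u) n
  have hanti : ∀ {m n : ℕ}, m ≤ n → s n ⊆ s m := by
    intro m n hmn y hy
    exact Bset_anti μ hmn hy
  set F := ⋂ n, s n with hF
  have hFmeas : MeasurableSet F := MeasurableSet.iInter hsmeas
  have hmemF : ∀ y, y ∈ F ↔ ∀ n, Bset μ t τ δ (pref y n) := by
    intro y
    simp [hF, hs]
  -- measure of F
  have hFbound : 1 - t - 2 * (δ : ℝ) ≤ (μ F).toReal := by
    have hdir : Directed (fun x1 x2 : Set Cantor => x1 ⊇ x2) s := by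
      intro a b
      exact ⟨max a b, hanti (le_max_left a b), hanti (le_max_right a b)⟩
    have hiInf : μ F = ⨅ n, μ (s n) :=
      Directed.measure_iInter (fun n => (hsmeas n).nullMeasurableSet) hdir ⟨0, measure_ne_top _ _⟩
    have hofReal : ENNReal.ofReal (1 - t - 2 * (δ : ℝ)) ≤ μ F := by
      rw [hiInf]
      refine le_iInf fun n => ?_
      exact ENNReal.ofReal_le_of_le_toReal (Bset_level_bound μ hδ0 ht0 hτ n)
    have h1 : (ENNReal.ofReal (1 - t - 2 * (δ : ℝ))).toReal ≤ (μ F).toReal :=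
      ENNReal.toReal_mono (measure_ne_top _ _) hofReal
    have hβ : (0:ℝ) ≤ 1 - t - 2 * (δ : ℝ) := by
      have : (0:ℝ) < (δ:ℝ) := by exact_mod_cast hδ0
      linarith
    rwa [ENNReal.toReal_ofReal hβ] at h1
  have hroot : θ + 2 * (δ : ℝ) ≤ creal μ F [] := by
    have : creal μ F [] = (μ F).toReal := by
      unfold creal
      rw [cylp_nil, Set.inter_univ]
    rw [this]
    have : (0:ℝ) < (δ:ℝ) := by exact_mod_cast hδ0
    linarith
  obtain ⟨mt, hsup, -⟩ := splitW_massTree μ (c := creal μ F) (θ := θ) hδ0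
    (creal_add μ F hFmeas) (creal_le_mu' μ F) hroot
  refine ⟨splitW (creal μ F) δ, mt, ?_⟩
  intro x hx
  have hBx : ∀ n, Bset μ t τ δ (pref x n) := by
    intro n
    have hpos : 0 < creal μ F (pref x n) := hsup _ (hx n)
    have hne : (F ∩ cylp (pref x n)).Nonempty := by
      apply MeasureTheory.nonempty_of_measure_ne_zero (μ := μ)
      intro h0
      rw [creal, h0] at hpos
      simp at hpos
    obtain ⟨y, hyF, hycyl⟩ := hne
    rw [mem_cylp, pref_length] at hycyl
    have := (hmemF y).1 hyF n
    rwa [hycyl] at this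
  exact koenig μ hδ0 hτ x hBx


/-- Player swap for the measure game: if player I wins `G(s, A)` then player II wins
`G(1-s, Aᶜ)`, and if player II wins `G(s-ε, A)` then player I wins `G(1-s, Aᶜ)`. -/
theorem player_swap (μ : Measure Cantor) [IsProbabilityMeasure μ]
    (A : Set Cantor) (s ε : ℝ) (hε : 0 < ε) (hs0 : 0 < s) (hs1 : s < 1) (hεs : ε ≤ s) :
    (WinsI μ s A → WinsII μ (1 - s) Aᶜ) ∧
    (WinsII μ (s - ε) A → WinsI μ (1 - s) Aᶜ) := by
  constructor
  · intro h
    obtain ⟨w, mt, hbody⟩ := massTree_of_winsI μ h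
    exact winsII_of_massTree μ (by linarith) hs0.le mt Aᶜ (fun x hx => hbody x hx)
  · intro h
    obtain ⟨w, mt, hbody⟩ := massTree_of_winsII μ (t := s - ε) (θ := 1 - s) h
      (by linarith) (by linarith) (by linarith)
    exact winsI_of_massTree μ (by linarith) mt Aᶜ (fun x hx hc => hc (hbody x hx))

end MeasureGame
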